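/- Let p be an odd prime and D > 0 a nonsquare integer which is a nonzero square modulo p; fix a square root √D ∈ ℚ_p. Then: (i) every Heegner form Q = [a,b,c] of discriminant D has p ∤ b, and (γ_Q·e₀) = +1 if and only if v_p(b − √D) ≥ 1, while (γ_Q·e₀) = −1 if and only if v_p(b + √D) ≥ 1; (ii) consequently, for every odd k ≥ 3 and every z in the complex upper half-plane, f_{k,D}^{(p)}(z) = 2·Σ_Q Q(z,1)^{−k}, where the sum is over all Heegner forms Q = [a,b,c] of discriminant D with v_p(b − √D) ≥ 1. -/

import Mathlib

open Complex

/-- Heegner forms of discriminant `D` and level `p`: integral binary quadratic forms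
`[a,b,c]` with `b² − 4ac = D` and `p ∣ a`. -/
def HeegnerForm (p : ℕ) (D : ℤ) : Type :=
  {Q : ℤ × ℤ × ℤ // Q.2.1 ^ 2 - 4 * Q.1 * Q.2.2 = D ∧ (p : ℤ) ∣ Q.1}

/-- The first `p`-adic root `ρ₁ = (−b + √D)/(2a)` of a form `[a,b,c]`,
for a fixed square root `sq` of `D` in `ℚ_p`. -/
noncomputable def padicRoot₁ (p : ℕ) [Fact p.Prime] (sq : ℚ_[p]) (Q : ℤ × ℤ × ℤ) : ℚ_[p] :=
  ((-Q.2.1 : ℤ) + sq) / (2 * (Q.1 : ℚ_[p]))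

/-- The second `p`-adic root `ρ₂ = (−b − √D)/(2a)` of a form `[a,b,c]`. -/
noncomputable def padicRoot₂ (p : ℕ) [Fact p.Prime] (sq : ℚ_[p]) (Q : ℤ × ℤ × ℤ) : ℚ_[p] :=
  ((-Q.2.1 : ℤ) - sq) / (2 * (Q.1 : ℚ_[p]))

/-- The `p`-adic intersection number `(γ_Q · e₀) ∈ {±1}`: it is `+1` if
`v_p(ρ₁) ≥ 0` and `v_p(ρ₂) ≤ −1`, and `−1` otherwise (for Heegner forms the
remaining case is `v_p(ρ₁) ≤ −1`, `v_p(ρ₂) ≥ 0`). -/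
noncomputable def gQe0 (p : ℕ) [Fact p.Prime] (sq : ℚ_[p]) (Q : ℤ × ℤ × ℤ) : ℤ :=
  if 0 ≤ (padicRoot₁ p sq Q).valuation ∧ (padicRoot₂ p sq Q).valuation ≤ -1 then 1 else -1

variable {p : ℕ} [Fact p.Prime]

lemma padicValNeg (x : ℚ_[p]) : (-x).valuation = x.valuation := by
  rcases eq_or_ne x 0 with rfl | h
  · simp
  · have hm : ((-1 : ℤ) : ℚ_[p]) = -1 := by push_cast; ring
    have h1 : ((-1 : ℚ_[p])).valuation = 0 := by
      rw [← hm, Padic.valuation_intCast]; simp [padicValInt]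
    have := Padic.valuation_mul (x := (-1 : ℚ_[p])) (y := x) (by norm_num) h
    rw [neg_one_mul, h1] at this
    omega

lemma padicValDiv (x y : ℚ_[p]) (hx : x ≠ 0) (hy : y ≠ 0) :
    (x / y).valuation = x.valuation - y.valuation := by
  have hxy : x / y ≠ 0 := div_ne_zero hx hy
  have := Padic.valuation_mul hxy hy
  rw [div_mul_cancel₀ _ hy] at this
  omega

lemma keyLemma (hp : p ≠ 2) {D : ℤ} (hDns : ¬ IsSquare D)
    (hDp : (D : ZMod p) ≠ 0) {sq : ℚ_[p]} (hsq : sq ^ 2 = (D : ℚ_[p]))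
    (a b c : ℤ) (hdisc : b ^ 2 - 4 * a * c = D) (hpa : (p : ℤ) ∣ a) :
    ¬ (p : ℤ) ∣ b ∧
    (gQe0 p sq (a, b, c) = 1 ↔ 1 ≤ ((b : ℚ_[p]) - sq).valuation) ∧
    (gQe0 p sq (a, b, c) = -1 ↔ 1 ≤ ((b : ℚ_[p]) + sq).valuation) := by
  have hpp : Nat.Prime p := Fact.out
  have hppz : Prime (p : ℤ) := Nat.prime_iff_prime_int.mp hpp
  have hpD : ¬ (p : ℤ) ∣ D := by
    intro h
    exact hDp ((ZMod.intCast_zmod_eq_zero_iff_dvd D p).mpr h)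
  have hD0 : D ≠ 0 := by rintro rfl; exact hDns ⟨0, by ring⟩
  have ha : a ≠ 0 := by rintro rfl; exact hDns ⟨b, by linear_combination -hdisc⟩
  have hc : c ≠ 0 := by rintro rfl; exact hDns ⟨b, by linear_combination -hdisc⟩
  have hp2 : ¬ (p : ℤ) ∣ 2 := by
    intro h
    have h2 : p ∣ 2 := by exact_mod_cast h
    exact hp ((Nat.prime_dvd_prime_iff_eq hpp Nat.prime_two).mp h2)
  have hb : ¬ (p : ℤ) ∣ b := by
    intro h
    exact hpD (hdisc ▸ dvd_sub (by simpa [pow_two] using h.mul_left b)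
      ((hpa.mul_left 4).mul_right c))
  have hb0 : b ≠ 0 := fun h => hb (h ▸ dvd_zero _)
  have hsq0 : sq ≠ 0 := by
    intro h
    rw [h] at hsq
    have : ((0:ℤ) : ℚ_[p]) = (D : ℚ_[p]) := by simpa using hsq
    exact hD0 (by exact_mod_cast this.symm)
  -- valuation of sq is 0
  have vsq : sq.valuation = 0 := by
    have h2 : sq * sq = ((D : ℤ) : ℚ_[p]) := by rw [← pow_two]; exact_mod_cast hsq
    have h3 := Padic.valuation_mul hsq0 hsq0
    rw [h2, Padic.valuation_intCast, padicValInt.eq_zero_of_not_dvd hpD] at h3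
    simp at h3
    omega
  have vb : ((b : ℚ_[p])).valuation = 0 := by
    rw [Padic.valuation_intCast, padicValInt.eq_zero_of_not_dvd hb]; simp
  have hbm : (b : ℚ_[p]) - sq ≠ 0 := by
    intro h
    rw [sub_eq_zero] at h
    have hb' : ((b : ℚ_[p])) ^ 2 = (D : ℚ_[p]) := by rw [h]; exact hsq
    have : (b : ℤ) ^ 2 = D := by exact_mod_cast hb'
    exact hDns ⟨b, by linear_combination -this⟩
  have hbp : (b : ℚ_[p]) + sq ≠ 0 := by
    intro h
    have h' : (b : ℚ_[p]) = -sq := by linear_combination h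
    have hb' : ((b : ℚ_[p])) ^ 2 = (D : ℚ_[p]) := by rw [h']; rw [neg_sq]; exact hsq
    have : (b : ℤ) ^ 2 = D := by exact_mod_cast hb'
    exact hDns ⟨b, by linear_combination -this⟩
  -- product relation
  have hcast : ((b : ℚ_[p])) ^ 2 - ((4 * a * c : ℤ) : ℚ_[p]) = (D : ℚ_[p]) := by
    exact_mod_cast congrArg (fun n : ℤ => (n : ℚ_[p])) hdisc
  have prod : ((b : ℚ_[p]) - sq) * ((b : ℚ_[p]) + sq) = ((4 * a * c : ℤ) : ℚ_[p]) := by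
    linear_combination hcast - hsq
  have hac0 : (4 * a * c : ℤ) ≠ 0 := by
    simp [ha, hc]
  -- valuation sum relation
  have va1 : 1 ≤ ((a : ℚ_[p])).valuation := by
    rw [Padic.valuation_intCast]
    have := (padicValInt_dvd_iff (p := p) 1 a).mp (by simpa using hpa)
    rcases this with h | h
    · exact absurd h ha
    · exact_mod_cast h
  have vc0 : 0 ≤ ((c : ℚ_[p])).valuation := by
    rw [Padic.valuation_intCast]; exact Int.natCast_nonneg _
  have vsum : ((b : ℚ_[p]) - sq).valuation + ((b : ℚ_[p]) + sq).valuation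
      = ((a : ℚ_[p])).valuation + ((c : ℚ_[p])).valuation := by
    have h1 := Padic.valuation_mul hbm hbp
    rw [prod, Padic.valuation_intCast] at h1
    have h4 : ¬ (p : ℤ) ∣ 4 := by
      intro h
      exact hp2 (hppz.dvd_of_dvd_pow (n := 2) (by norm_num at h ⊢; exact_mod_cast h))
    have hm1 : padicValInt p (4 * a * c) = padicValInt p (4 * a) + padicValInt p c :=
      padicValInt.mul (by simp [ha]) hc
    have hm2 : padicValInt p (4 * a) = padicValInt p 4 + padicValInt p a :=
      padicValInt.mul (by norm_num) ha
    have hm3 : padicValInt p 4 = 0 := padicValInt.eq_zero_of_not_dvd h4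
    rw [hm1, hm2, hm3] at h1
    rw [Padic.valuation_intCast a, Padic.valuation_intCast c]
    push_cast at h1 ⊢
    omega
  -- both valuations nonneg
  have vbm0 : 0 ≤ ((b : ℚ_[p]) - sq).valuation := by
    have := Padic.le_valuation_add (x := (b : ℚ_[p])) (y := -sq)
      (by rw [← sub_eq_add_neg]; exact hbm)
    rw [← sub_eq_add_neg, padicValNeg, vb, vsq] at this
    simpa using this
  have vbp0 : 0 ≤ ((b : ℚ_[p]) + sq).valuation := by
    have := Padic.le_valuation_add (x := (b : ℚ_[p])) (y := sq) hbp
    rw [vb, vsq] at this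
    simpa using this
  -- not both ≥ 1
  have not_both : ¬ (1 ≤ ((b : ℚ_[p]) - sq).valuation ∧ 1 ≤ ((b : ℚ_[p]) + sq).valuation) := by
    rintro ⟨h1, h2⟩
    have hsum : ((b : ℚ_[p]) - sq) + ((b : ℚ_[p]) + sq) = ((2 * b : ℤ) : ℚ_[p]) := by
      push_cast; ring
    have h2b : (2 * b : ℤ) ≠ 0 := by simp [hb0]
    have h2b0 : ((2 * b : ℤ) : ℚ_[p]) ≠ 0 := by exact_mod_cast h2b
    have hv2b : (((2 * b : ℤ) : ℚ_[p])).valuation = 0 := by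
      rw [Padic.valuation_intCast, padicValInt.eq_zero_of_not_dvd]
      · simp
      · intro h
        rcases hppz.2.2 2 b h with h' | h'
        · exact hp2 h'
        · exact hb h'
    have := Padic.le_valuation_add (x := (b : ℚ_[p]) - sq) (y := (b : ℚ_[p]) + sq)
      (by rw [hsum]; exact h2b0)
    rw [hsum, hv2b] at this
    have hmin : (1 : ℤ) ≤ min ((b : ℚ_[p]) - sq).valuation ((b : ℚ_[p]) + sq).valuation :=
      le_min h1 h2
    omega
  have one_of : 1 ≤ ((b : ℚ_[p]) - sq).valuation ∨ 1 ≤ ((b : ℚ_[p]) + sq).valuation := by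
    omega
  -- root valuations
  have hden0 : (2 * (a : ℚ_[p])) ≠ 0 := by
    have : ((a : ℤ) : ℚ_[p]) ≠ 0 := by exact_mod_cast ha
    simpa using this
  have vden : (2 * (a : ℚ_[p])).valuation = ((a : ℚ_[p])).valuation := by
    have h2 : (2 * (a : ℚ_[p])) = ((2 * a : ℤ) : ℚ_[p]) := by push_cast; ring
    rw [h2, Padic.valuation_intCast, padicValInt.mul (by norm_num) ha,
      padicValInt.eq_zero_of_not_dvd hp2, Padic.valuation_intCast]
    push_cast
    omega
  have vroot1 : (padicRoot₁ p sq (a, b, c)).valuation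
      = ((b : ℚ_[p]) - sq).valuation - ((a : ℚ_[p])).valuation := by
    have hnum : (((-b : ℤ) : ℚ_[p]) + sq) = -((b : ℚ_[p]) - sq) := by push_cast; ring
    unfold padicRoot₁
    simp only
    rw [hnum, padicValDiv _ _ (neg_ne_zero.mpr hbm) hden0, padicValNeg, vden]
  have vroot2 : (padicRoot₂ p sq (a, b, c)).valuation
      = ((b : ℚ_[p]) + sq).valuation - ((a : ℚ_[p])).valuation := by
    have hnum : (((-b : ℤ) : ℚ_[p]) - sq) = -((b : ℚ_[p]) + sq) := by push_cast; ring
    unfold padicRoot₂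
    simp only
    rw [hnum, padicValDiv _ _ (neg_ne_zero.mpr hbp) hden0, padicValNeg, vden]
  refine ⟨hb, ?_, ?_⟩ <;> unfold gQe0 <;>
    rcases one_of with h | h
  · have hz : ((b : ℚ_[p]) + sq).valuation = 0 := by omega
    rw [if_pos ⟨by omega, by omega⟩]
    exact ⟨fun _ => h, fun _ => rfl⟩
  · have hz : ((b : ℚ_[p]) - sq).valuation = 0 := by omega
    rw [if_neg (by omega)]
    constructor
    · intro h'; omega
    · intro h'; omega
  · have hz : ((b : ℚ_[p]) + sq).valuation = 0 := by omega
    rw [if_pos ⟨by omega, by omega⟩]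
    constructor
    · intro h'; omega
    · intro h'; omega
  · have hz : ((b : ℚ_[p]) - sq).valuation = 0 := by omega
    rw [if_neg (by omega)]
    exact ⟨fun _ => h, fun _ => rfl⟩

def negForm (p : ℕ) (D : ℤ) (Q : HeegnerForm p D) : HeegnerForm p D :=
  ⟨(-Q.1.1, -Q.1.2.1, -Q.1.2.2), by linear_combination Q.2.1, dvd_neg.mpr Q.2.2⟩

lemma negForm_negForm (p : ℕ) (D : ℤ) (Q : HeegnerForm p D) :
    negForm p D (negForm p D Q) = Q := Subtype.ext (by simp [negForm])

/-- Let `p` be an odd prime and `D > 0` a nonsquare integer which is a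
nonzero square modulo `p`; fix `√D ∈ ℚ_p`.  Then: (i) every Heegner form `[a,b,c]` of
discriminant `D` has `p ∤ b`, and `(γ_Q·e₀) = +1 ↔ v_p(b − √D) ≥ 1`, while
`(γ_Q·e₀) = −1 ↔ v_p(b + √D) ≥ 1`; (ii) consequently, for every odd `k ≥ 3` and every
`z` in the complex upper half-plane,
`f_{k,D}^{(p)}(z) = 2·Σ_{Q : v_p(b−√D) ≥ 1} Q(z,1)^{−k}`. -/
theorem stmt17 (p : ℕ) [Fact p.Prime] (hp : p ≠ 2)
    (D : ℤ) (hD : 0 < D) (hDns : ¬ IsSquare D)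
    (hDp : IsSquare (D : ZMod p) ∧ (D : ZMod p) ≠ 0)
    (sq : ℚ_[p]) (hsq : sq ^ 2 = (D : ℚ_[p])) :
    (∀ Q : HeegnerForm p D,
      ¬ (p : ℤ) ∣ Q.1.2.1 ∧
      (gQe0 p sq Q.1 = 1 ↔ 1 ≤ ((Q.1.2.1 : ℚ_[p]) - sq).valuation) ∧
      (gQe0 p sq Q.1 = -1 ↔ 1 ≤ ((Q.1.2.1 : ℚ_[p]) + sq).valuation)) ∧
    (∀ k : ℕ, Odd k → 3 ≤ k → ∀ z : ℂ, 0 < z.im →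
      (∑' Q : HeegnerForm p D,
          ((gQe0 p sq Q.1 : ℤ) : ℂ) *
            ((Q.1.1 : ℂ) * z ^ 2 + (Q.1.2.1 : ℂ) * z + (Q.1.2.2 : ℂ)) ^ (-(k : ℤ))) =
        2 * ∑' Q : {Q : HeegnerForm p D // 1 ≤ ((Q.1.2.1 : ℚ_[p]) - sq).valuation},
          ((Q.1.1.1 : ℂ) * z ^ 2 + (Q.1.1.2.1 : ℂ) * z + (Q.1.1.2.2 : ℂ)) ^ (-(k : ℤ))) := by
  have hkey : ∀ Q : HeegnerForm p D,
      ¬ (p : ℤ) ∣ Q.1.2.1 ∧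
      (gQe0 p sq Q.1 = 1 ↔ 1 ≤ ((Q.1.2.1 : ℚ_[p]) - sq).valuation) ∧
      (gQe0 p sq Q.1 = -1 ↔ 1 ≤ ((Q.1.2.1 : ℚ_[p]) + sq).valuation) := by
    intro Q
    exact keyLemma hp hDns hDp.2 hsq Q.1.1 Q.1.2.1 Q.1.2.2 Q.2.1 Q.2.2
  refine ⟨hkey, ?_⟩
  intro k hk _ z _
  -- the negation involution
  have hodd : Odd (-(k : ℤ)) := ((Int.odd_coe_nat k).mpr hk).neg
  set F : HeegnerForm p D → ℂ := fun Q =>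
    ((gQe0 p sq Q.1 : ℤ) : ℂ) *
      ((Q.1.1 : ℂ) * z ^ 2 + (Q.1.2.1 : ℂ) * z + (Q.1.2.2 : ℂ)) ^ (-(k : ℤ)) with hF
  set St : Set (HeegnerForm p D) := {Q | 1 ≤ ((Q.1.2.1 : ℚ_[p]) - sq).valuation} with hSt
  set G : ↥St → ℂ := fun Q =>
    ((Q.1.1.1 : ℂ) * z ^ 2 + (Q.1.1.2.1 : ℂ) * z + (Q.1.1.2.2 : ℂ)) ^ (-(k : ℤ)) with hG
  have hconv : (∑' Q : {Q : HeegnerForm p D // 1 ≤ ((Q.1.2.1 : ℚ_[p]) - sq).valuation},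
      ((Q.1.1.1 : ℂ) * z ^ 2 + (Q.1.1.2.1 : ℂ) * z + (Q.1.1.2.2 : ℂ)) ^ (-(k : ℤ)))
      = ∑' t : ↥St, G t := rfl
  rw [hconv]
  have hdichot : ∀ Q : HeegnerForm p D, gQe0 p sq Q.1 = 1 ∨ gQe0 p sq Q.1 = -1 := by
    intro Q; unfold gQe0; split <;> simp
  have hnegmem : ∀ Q : HeegnerForm p D, (negForm p D Q ∈ St ↔ gQe0 p sq Q.1 = -1) := by
    intro Q
    have h1 : (((negForm p D Q).1.2.1 : ℚ_[p]) - sq) = -((Q.1.2.1 : ℚ_[p]) + sq) := by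
      show (((-Q.1.2.1 : ℤ) : ℚ_[p]) - sq) = _
      push_cast; ring
    have h2 : negForm p D Q ∈ St ↔ 1 ≤ (((negForm p D Q).1.2.1 : ℚ_[p]) - sq).valuation :=
      Iff.rfl
    rw [h2, h1, padicValNeg]
    exact ((hkey Q).2.2).symm
  have hmem : ∀ Q : HeegnerForm p D, (Q ∈ St ↔ gQe0 p sq Q.1 = 1) := fun Q =>
    ((hkey Q).2.1).symm
  let e : ↥(Stᶜ) ≃ ↥St :=
    { toFun := fun s => ⟨negForm p D s.1, by
        rcases hdichot s.1 with h | h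
        · exact absurd ((hmem s.1).mpr h) s.2
        · exact (hnegmem s.1).mpr h⟩
      invFun := fun t => ⟨negForm p D t.1, by
        intro hmem'
        have h1 : gQe0 p sq t.1.1 = 1 := (hmem t.1).mp t.2
        have h2 : gQe0 p sq t.1.1 = -1 := (hnegmem t.1).mp hmem'
        omega⟩
      left_inv := fun s => Subtype.ext (negForm_negForm p D s.1)
      right_inv := fun t => Subtype.ext (negForm_negForm p D t.1) }
  have hFS : ∀ t : ↥St, F t.1 = G t := by
    intro t
    have h1 : gQe0 p sq t.1.1 = 1 := (hmem t.1).mp t.2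
    rw [hF, hG]
    simp only [h1]
    push_cast
    ring
  have hFC : ∀ s : ↥(Stᶜ), F s.1 = G (e s) := by
    intro s
    have h1 : gQe0 p sq s.1.1 = -1 := by
      rcases hdichot s.1 with h | h
      · exact absurd ((hmem s.1).mpr h) s.2
      · exact h
    have he1 : (e s).1 = negForm p D s.1 := rfl
    have hpoly : (((e s).1.1.1 : ℂ) * z ^ 2 + ((e s).1.1.2.1 : ℂ) * z + ((e s).1.1.2.2 : ℂ))
        = -((s.1.1.1 : ℂ) * z ^ 2 + (s.1.1.2.1 : ℂ) * z + (s.1.1.2.2 : ℂ)) := by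
      rw [he1]
      show (((-s.1.1.1 : ℤ) : ℂ) * z ^ 2 + ((-s.1.1.2.1 : ℤ) : ℂ) * z + ((-s.1.1.2.2 : ℤ) : ℂ)) = _
      push_cast; ring
    rw [hF, hG]
    simp only [h1, hpoly, hodd.neg_zpow]
    push_cast
    ring
  by_cases hsumm : Summable G
  · have hS : Summable (F ∘ ((↑) : ↥St → HeegnerForm p D)) :=
      hsumm.congr (fun t => (hFS t).symm)
    have hC : Summable (F ∘ ((↑) : ↥(Stᶜ) → HeegnerForm p D)) := by
      have h1 : Summable (G ∘ e) := (e.summable_iff).mpr hsumm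
      exact h1.congr (fun s => (hFC s).symm)
    have htot := Summable.tsum_add_tsum_compl (f := F) (s := St) hS hC
    have h2 : (∑' s : ↥(Stᶜ), F s.1) = ∑' t : ↥St, G t := by
      rw [tsum_congr hFC]
      exact e.tsum_eq G
    have h3 : (∑' t : ↥St, F t.1) = ∑' t : ↥St, G t := tsum_congr hFS
    calc (∑' Q : HeegnerForm p D, F Q)
        = (∑' t : ↥St, F t.1) + (∑' s : ↥(Stᶜ), F s.1) := htot.symm
      _ = (∑' t : ↥St, G t) + (∑' t : ↥St, G t) := by rw [h2, h3]
      _ = 2 * (∑' t : ↥St, G t) := by ring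
  · have h0 : ¬ Summable F := by
      intro h
      exact hsumm ((h.comp_injective Subtype.coe_injective).congr hFS)
    rw [tsum_eq_zero_of_not_summable h0, tsum_eq_zero_of_not_summable hsumm]
    ring
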